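/- Let 0 < ρ ≤ ∞, I = (0, ρ) ⊂ ℝ, and let g, f : I → ℝ with g(x) = α·x^k for some α > 0 and integer k ≥ 0. Suppose that for every rank-one 3×3 positive semidefinite matrix A with entries in I, the matrix obtained from A by applying g to the entries in positions (1,1),(1,2),(2,1),(2,2) and f to all other entries is positive semidefinite. Then there exists c ∈ [0, 1] such that f(x) = c·g(x) for all x ∈ I. -/

import Mathlib

theorem forbidden_2x2_block_forces_scalar (ρ : EReal) (hρ : 0 < ρ)
    (α : ℝ) (hα : 0 < α) (k : ℕ) (f : ℝ → ℝ)
    (h : ∀ A : Matrix (Fin 3) (Fin 3) ℝ, A.PosSemidef → A.rank = 1 →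
      (∀ i j, 0 < A i j ∧ (A i j : EReal) < ρ) →
      (Matrix.of fun i j => if i.val ≤ 1 ∧ j.val ≤ 1
        then α * A i j ^ k else f (A i j)).PosSemidef) :
    ∃ c ∈ Set.Icc (0 : ℝ) 1,
      ∀ x : ℝ, 0 < x → (x : EReal) < ρ → f x = c * (α * x ^ k) := by
  -- Main key fact from testing on rank-one matrices
  have key : ∀ z w : ℝ, 0 < z → z ≤ w → (w : EReal) < ρ →
      0 ≤ f w ∧ f w ≤ α * w ^ k ∧ α * z ^ k * f w = α * w ^ k * f z := by
    intro z w hz hzw hwρ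
    have hw0 : 0 < w := hz.trans_le hzw
    set v : Fin 3 → ℝ := ![z, w, w] with hv
    have hv0 : v 0 = z := rfl
    have hv1 : v 1 = w := rfl
    have hv2 : v 2 = w := rfl
    set A : Matrix (Fin 3) (Fin 3) ℝ := Matrix.of fun i j => v i * v j / w with hA
    have hAapp : ∀ i j, A i j = v i * v j / w := fun i j => rfl
    have hA00 : A 0 0 = z * z / w := rfl
    have hA01 : A 0 1 = z := by
      simp only [hAapp, hv0, hv1]; field_simp
    have hA02 : A 0 2 = z := by
      simp only [hAapp, hv0, hv2]; field_simp
    have hA10 : A 1 0 = z := by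
      simp only [hAapp, hv1, hv0]; field_simp; try ring
    have hA11 : A 1 1 = w := by
      simp only [hAapp, hv1]; field_simp
    have hA12 : A 1 2 = w := by
      simp only [hAapp, hv1, hv2]; field_simp
    have hA20 : A 2 0 = z := by
      simp only [hAapp, hv2, hv0]; field_simp; try ring
    have hA21 : A 2 1 = w := by
      simp only [hAapp, hv2, hv1]; field_simp
    have hA22 : A 2 2 = w := by
      simp only [hAapp, hv2]; field_simp
    have hvz : ∀ i, z ≤ v i ∧ v i ≤ w := by
      intro i
      fin_cases i
      · exact ⟨le_rfl, hzw⟩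
      · exact ⟨hzw, le_rfl⟩
      · exact ⟨hzw, le_rfl⟩
    -- rows of A are multiples of v
    have hrow : ∀ i, A i = (v i / w) • v := by
      intro i
      funext j
      rw [Pi.smul_apply, smul_eq_mul, hAapp]
      ring
    -- A is positive semidefinite
    have hApsd : A.PosSemidef := by
      rw [Matrix.posSemidef_iff_dotProduct_mulVec]
      constructor
      · ext i j
        rw [Matrix.conjTranspose_apply, star_trivial, hAapp, hAapp]
        ring
      · intro x
        have hform : dotProduct (star x) (A.mulVec x) =
            (v 0 * x 0 + v 1 * x 1 + v 2 * x 2) ^ 2 / w := by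
          simp only [Matrix.mulVec, dotProduct, Fin.sum_univ_three, star_trivial, hAapp]
          field_simp
        rw [hform]
        positivity
    -- A has rank one
    have hvne : v ≠ 0 := by
      intro hcon
      have := congrFun hcon 1
      rw [hv1] at this
      exact hw0.ne' this
    have hArank : A.rank = 1 := by
      rw [Matrix.rank_eq_finrank_span_row]
      have hspan : Submodule.span ℝ (Set.range A) = Submodule.span ℝ {v} := by
        apply le_antisymm
        · rw [Submodule.span_le]
          rintro _ ⟨i, rfl⟩
          rw [hrow i]
          exact Submodule.smul_mem _ _ (Submodule.subset_span rfl)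
        · rw [Submodule.span_le, Set.singleton_subset_iff]
          have : A 1 = v := by
            rw [hrow, hv1, div_self hw0.ne', one_smul]
          exact this ▸ Submodule.subset_span ⟨1, rfl⟩
      change Module.finrank ℝ (Submodule.span ℝ (Set.range A)) = 1
      rw [hspan, finrank_span_singleton hvne]
    -- the entries lie in the interval
    have hentries : ∀ i j, 0 < A i j ∧ (A i j : EReal) < ρ := by
      intro i j
      obtain ⟨hi1, hi2⟩ := hvz i
      obtain ⟨hj1, hj2⟩ := hvz j
      have hvi : 0 < v i := hz.trans_le hi1
      have hvj : 0 < v j := hz.trans_le hj1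
      have hpos : 0 < A i j := by rw [hAapp]; positivity
      have hle : A i j ≤ w := by
        rw [hAapp, div_le_iff₀ hw0]
        nlinarith
      exact ⟨hpos, lt_of_le_of_lt (EReal.coe_le_coe_iff.mpr hle) hwρ⟩
    have hB := h A hApsd hArank hentries
    set B : Matrix (Fin 3) (Fin 3) ℝ :=
      Matrix.of (fun i j => if i.val ≤ 1 ∧ j.val ≤ 1
        then α * A i j ^ k else f (A i j)) with hBdef
    have hBapp : ∀ i j, B i j = if i.val ≤ 1 ∧ j.val ≤ 1
        then α * A i j ^ k else f (A i j) := fun i j => rfl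
    have hB00 : B 0 0 = α * (z * z / w) ^ k := by
      rw [hBapp, if_pos (by omega : (0:Fin 3).val ≤ 1 ∧ (0:Fin 3).val ≤ 1), hA00]
    have hB01 : B 0 1 = α * z ^ k := by
      rw [hBapp, if_pos (by omega : (0:Fin 3).val ≤ 1 ∧ (1:Fin 3).val ≤ 1), hA01]
    have hB02 : B 0 2 = f z := by
      rw [hBapp, if_neg (by omega : ¬((0:Fin 3).val ≤ 1 ∧ (2:Fin 3).val ≤ 1)), hA02]
    have hB10 : B 1 0 = α * z ^ k := by
      rw [hBapp, if_pos (by omega : (1:Fin 3).val ≤ 1 ∧ (0:Fin 3).val ≤ 1), hA10]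
    have hB11 : B 1 1 = α * w ^ k := by
      rw [hBapp, if_pos (by omega : (1:Fin 3).val ≤ 1 ∧ (1:Fin 3).val ≤ 1), hA11]
    have hB12 : B 1 2 = f w := by
      rw [hBapp, if_neg (by omega : ¬((1:Fin 3).val ≤ 1 ∧ (2:Fin 3).val ≤ 1)), hA12]
    have hB20 : B 2 0 = f z := by
      rw [hBapp, if_neg (by omega : ¬((2:Fin 3).val ≤ 1 ∧ (0:Fin 3).val ≤ 1)), hA20]
    have hB21 : B 2 1 = f w := by
      rw [hBapp, if_neg (by omega : ¬((2:Fin 3).val ≤ 1 ∧ (1:Fin 3).val ≤ 1)), hA21]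
    have hB22 : B 2 2 = f w := by
      rw [hBapp, if_neg (by omega : ¬((2:Fin 3).val ≤ 1 ∧ (2:Fin 3).val ≤ 1)), hA22]
    -- f w ≥ 0 from e₃ᵀ B e₃
    have hq0 : 0 ≤ f w := by
      have h3 := hB.dotProduct_mulVec_nonneg ![0, 0, 1]
      simp only [Matrix.mulVec, dotProduct, Fin.sum_univ_three, star_trivial,
        Matrix.cons_val_zero, Matrix.cons_val_one, Matrix.head_cons,
        Matrix.cons_val_two, Matrix.tail_cons, mul_zero, mul_one, zero_mul, one_mul,
        zero_add, add_zero] at h3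
      rw [hB22] at h3
      exact h3
    -- f w ≤ α w^k from (e₂ - e₃)ᵀ B (e₂ - e₃)
    have hq1 : f w ≤ α * w ^ k := by
      have h3 := hB.dotProduct_mulVec_nonneg ![0, 1, -1]
      simp only [Matrix.mulVec, dotProduct, Fin.sum_univ_three, star_trivial,
        Matrix.cons_val_zero, Matrix.cons_val_one, Matrix.head_cons,
        Matrix.cons_val_two, Matrix.tail_cons, mul_zero, mul_one, zero_mul, one_mul,
        mul_neg, neg_mul, zero_add, add_zero, mul_neg_one, neg_neg] at h3
      rw [hB11, hB12, hB21, hB22] at h3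
      linarith
    -- det B ≥ 0
    have hdet : 0 ≤ B.det := by
      rw [hB.1.det_eq_prod_eigenvalues]
      exact Finset.prod_nonneg fun i _ => by exact_mod_cast hB.eigenvalues_nonneg i
    -- compute: (α w^k) * det B = -(α z^k f w - α w^k f z)^2
    have hcalc : α * w ^ k * B.det = -(α * z ^ k * f w - α * w ^ k * f z) ^ 2 := by
      rw [Matrix.det_fin_three, hB00, hB01, hB02, hB10, hB11, hB12, hB20, hB21, hB22]
      have hzw2 : (z * z / w) ^ k * w ^ k = z ^ k * z ^ k := by
        rw [← mul_pow, div_mul_cancel₀ _ hw0.ne', ← mul_pow]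
      linear_combination (α ^ 2 * (α * w ^ k * f w - f w * f w)) * hzw2
    have hfin : α * z ^ k * f w = α * w ^ k * f z := by
      have hb : 0 < α * w ^ k := by positivity
      have hsq : (α * z ^ k * f w - α * w ^ k * f z) ^ 2 ≤ 0 := by
        linarith [mul_nonneg hb.le hdet]
      have h0 : (α * z ^ k * f w - α * w ^ k * f z) ^ 2 = 0 :=
        le_antisymm hsq (sq_nonneg _)
      have := pow_eq_zero_iff two_ne_zero |>.mp h0
      linarith
    exact ⟨hq0, hq1, hfin⟩
  -- pick a base point x₀ in the interval
  obtain ⟨t, ht0, htρ⟩ := exists_between hρ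
  have htne_top : t ≠ ⊤ := htρ.ne_top
  have htne_bot : t ≠ ⊥ := ne_bot_of_gt ht0
  set x₀ : ℝ := t.toReal with hx₀def
  have hx₀coe : (x₀ : EReal) = t := EReal.coe_toReal htne_top htne_bot
  have hx₀pos : 0 < x₀ := by
    have h0 : (0 : EReal) < (x₀ : EReal) := by rw [hx₀coe]; exact ht0
    exact_mod_cast h0
  have hx₀ρ : (x₀ : EReal) < ρ := by rw [hx₀coe]; exact htρ
  obtain ⟨hf0, hf1, -⟩ := key x₀ x₀ hx₀pos le_rfl hx₀ρ
  have hg0 : 0 < α * x₀ ^ k := by positivity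
  refine ⟨f x₀ / (α * x₀ ^ k), ⟨div_nonneg hf0 hg0.le, (div_le_one hg0).mpr hf1⟩, ?_⟩
  intro x hx hxρ
  rcases le_total x x₀ with hle | hle
  · obtain ⟨-, -, heq⟩ := key x x₀ hx hle hx₀ρ
    field_simp
    exact mul_left_cancel₀ hα.ne' (by linear_combination -heq)
  · obtain ⟨-, -, heq⟩ := key x₀ x hx₀pos hle hxρ
    field_simp
    exact mul_left_cancel₀ hα.ne' (by linear_combination heq)
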